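/- For every positive integer N and integer i, there exists a nonzero homogeneous polynomial g ∈ ℂ[x_n : n ∈ ℤ] of degree N+1 in the variables x_j with j > i (so that ∂x_j(g) = 0 for all j ≤ i) satisfying E_i^N(g) = 0, where E_i = ∑_{s₁>i, s₂>i} x_{s₁+s₂-i} ∂x_{s₁} ∂x_{s₂}. -/

import Mathlib

open MvPolynomial

/-- The operator `E_i = ∑_{s₁>i, s₂>i} x_{s₁+s₂-i} ∂x_{s₁} ∂x_{s₂}` on `ℂ[x_n : n ∈ ℤ]`. -/
noncomputable def Eop (i : ℤ) (p : MvPolynomial ℤ ℂ) : MvPolynomial ℤ ℂ :=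
  ∑ᶠ s : ℤ × ℤ, if i < s.1 ∧ i < s.2 then
    X (s.1 + s.2 - i) * pderiv s.1 (pderiv s.2 p) else 0

/-- The summand defining `Eop`. -/
noncomputable def Esummand (i : ℤ) (p : MvPolynomial ℤ ℂ) (s : ℤ × ℤ) : MvPolynomial ℤ ℂ :=
  if i < s.1 ∧ i < s.2 then X (s.1 + s.2 - i) * pderiv s.1 (pderiv s.2 p) else 0

lemma Eop_eq (i : ℤ) (p : MvPolynomial ℤ ℂ) : Eop i p = ∑ᶠ s, Esummand i p s := rfl

lemma Esummand_support_subset (i : ℤ) (p : MvPolynomial ℤ ℂ) :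
    Function.support (Esummand i p) ⊆
      ⋃ j ∈ (p.vars : Set ℤ), (fun a => (a, j)) '' ((pderiv j p).vars : Set ℤ) := by
  intro s hs
  rw [Function.mem_support, Esummand] at hs
  split_ifs at hs with h
  · have h1 : pderiv s.1 (pderiv s.2 p) ≠ 0 := by
      intro h0; rw [h0, mul_zero] at hs; exact hs rfl
    have h2 : pderiv s.2 p ≠ 0 := by
      intro h0; rw [h0, map_zero] at h1; exact h1 rfl
    have hv1 : s.1 ∈ (pderiv s.2 p).vars := by
      by_contra hc; exact h1 (pderiv_eq_zero_of_notMem_vars hc)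
    have hv2 : s.2 ∈ p.vars := by
      by_contra hc; exact h2 (pderiv_eq_zero_of_notMem_vars hc)
    exact Set.mem_biUnion hv2 ⟨s.1, hv1, rfl⟩
  · exact absurd rfl hs

lemma Esummand_support_finite (i : ℤ) (p : MvPolynomial ℤ ℂ) :
    (Function.support (Esummand i p)).Finite :=
  Set.Finite.subset
    (Set.Finite.biUnion (p.vars.finite_toSet)
      (fun j _ => Set.Finite.image _ ((pderiv j p).vars.finite_toSet)))
    (Esummand_support_subset i p)

lemma Eop_add (i : ℤ) (p q : MvPolynomial ℤ ℂ) : Eop i (p + q) = Eop i p + Eop i q := by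
  rw [Eop_eq, Eop_eq, Eop_eq, ← finsum_add_distrib (Esummand_support_finite i p)
    (Esummand_support_finite i q)]
  congr 1
  funext s
  simp only [Esummand, map_add, Pi.add_apply]
  split_ifs with h
  · ring
  · rw [add_zero]

lemma Esummand_smul (i : ℤ) (c : ℂ) (p : MvPolynomial ℤ ℂ) (s : ℤ × ℤ) :
    Esummand i (c • p) s = c • Esummand i p s := by
  simp only [Esummand]
  split_ifs with h
  · rw [Derivation.map_smul, Derivation.map_smul, mul_smul_comm]
  · rw [smul_zero]

lemma Eop_smul (i : ℤ) (c : ℂ) (p : MvPolynomial ℤ ℂ) : Eop i (c • p) = c • Eop i p := by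
  rw [Eop_eq, Eop_eq, smul_finsum' c (Esummand_support_finite i p)]
  exact finsum_congr (Esummand_smul i c p)

lemma Eop_zero (i : ℤ) : Eop i 0 = 0 := by
  rw [Eop_eq]
  have : ∀ s : ℤ × ℤ, Esummand i (0 : MvPolynomial ℤ ℂ) s = 0 := by
    intro s; simp [Esummand]
  rw [finsum_congr this, finsum_zero]

lemma Eop_iter_zero (i : ℤ) (k : ℕ) : (Eop i)^[k] 0 = 0 := by
  induction k with
  | zero => rfl
  | succ n ih => rw [Function.iterate_succ_apply, Eop_zero, ih]

lemma Eop_sub (i : ℤ) (p q : MvPolynomial ℤ ℂ) : Eop i (p - q) = Eop i p - Eop i q := by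
  have := Eop_add i (p - q) q
  rw [sub_add_cancel] at this
  rw [this]; ring

lemma Eop_iter_sub (i : ℤ) (k : ℕ) (p q : MvPolynomial ℤ ℂ) :
    (Eop i)^[k] (p - q) = (Eop i)^[k] p - (Eop i)^[k] q := by
  induction k generalizing p q with
  | zero => simp
  | succ n ih => simp only [Function.iterate_succ_apply, Eop_sub, ih]

lemma Eop_iter_smul (i : ℤ) (k : ℕ) (c : ℂ) (p : MvPolynomial ℤ ℂ) :
    (Eop i)^[k] (c • p) = c • (Eop i)^[k] p := by
  induction k generalizing p with
  | zero => simp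
  | succ n ih => simp only [Function.iterate_succ_apply, Eop_smul, ih]

lemma Eop_iter_add (i : ℤ) (k : ℕ) (p q : MvPolynomial ℤ ℂ) :
    (Eop i)^[k] (p + q) = (Eop i)^[k] p + (Eop i)^[k] q := by
  induction k generalizing p q with
  | zero => simp
  | succ n ih => simp only [Function.iterate_succ_apply, Eop_add, ih]

lemma Eop_iter_sum {α : Type*} (i : ℤ) (k : ℕ) (T : Finset α) (f : α → MvPolynomial ℤ ℂ) :
    (Eop i)^[k] (∑ a ∈ T, f a) = ∑ a ∈ T, (Eop i)^[k] (f a) := by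
  classical
  induction T using Finset.induction with
  | empty => simp [Eop_iter_zero]
  | insert _ _ h =>
      rename_i ihT
      simp only [Finset.sum_insert h, Eop_iter_add, ihT]

/-- weight (index sum) of an exponent vector -/
def wt (σ : ℤ →₀ ℕ) : ℤ := σ.sum fun j e => j * (e : ℤ)

/-- degree of an exponent vector -/
def dg (σ : ℤ →₀ ℕ) : ℕ := σ.sum fun _ e => e

lemma wt_add_single (σ : ℤ →₀ ℕ) (c : ℤ) : wt (σ + Finsupp.single c 1) = wt σ + c := by
  rw [wt, wt, Finsupp.sum_add_index' (by simp) (by intro a b c; push_cast; ring),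
    Finsupp.sum_single_index (by simp)]
  simp

lemma dg_add_single (σ : ℤ →₀ ℕ) (c : ℤ) : dg (σ + Finsupp.single c 1) = dg σ + 1 := by
  rw [dg, dg, Finsupp.sum_add_index' (by simp) (by intro a b c; ring),
    Finsupp.sum_single_index (by simp)]

lemma dg_eq_degree (σ : ℤ →₀ ℕ) : dg σ = σ.degree := rfl

/-- the coefficient appearing when `Eop` acts on a monomial -/
noncomputable def coefN (σ : ℤ →₀ ℕ) (s : ℤ × ℤ) : ℕ :=
  σ s.2 * (σ - Finsupp.single s.2 1 : ℤ →₀ ℕ) s.1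

lemma X_mul_monomial' (c : ℤ) (τ : ℤ →₀ ℕ) (a : ℂ) :
    X c * monomial τ a = monomial (τ + Finsupp.single c 1) a := by
  have hX : (X c : MvPolynomial ℤ ℂ) = monomial (Finsupp.single c 1) 1 := rfl
  rw [hX, monomial_mul, one_mul, add_comm]

lemma Eop_monomial (i : ℤ) (σ : ℤ →₀ ℕ) (hσ : ∀ j ∈ σ.support, i < j) :
    Eop i (monomial σ (1 : ℂ)) = ∑ s ∈ σ.support ×ˢ σ.support,
      (coefN σ s : ℂ) •
        monomial (σ - Finsupp.single s.2 1 - Finsupp.single s.1 1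
          + Finsupp.single (s.1 + s.2 - i) 1) (1 : ℂ) := by
  classical
  rw [Eop_eq, finsum_eq_sum_of_support_subset _
    (s := σ.support ×ˢ σ.support) ?_]
  · apply Finset.sum_congr rfl
    intro s hs
    rw [Finset.mem_product] at hs
    rw [Esummand, if_pos ⟨hσ _ hs.1, hσ _ hs.2⟩, pderiv_monomial, pderiv_monomial,
      X_mul_monomial', smul_monomial, smul_eq_mul, mul_one]
    congr 1
    rw [coefN]
    push_cast
    ring
  · intro s hs
    rw [Function.mem_support, Esummand] at hs
    split_ifs at hs with h
    · have h1 : pderiv s.1 (pderiv s.2 (monomial σ (1:ℂ))) ≠ 0 := by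
        intro h0; rw [h0, mul_zero] at hs; exact hs rfl
      rw [pderiv_monomial, pderiv_monomial] at h1
      have hc : ((1:ℂ) * (σ s.2 : ℂ)) * (((σ - Finsupp.single s.2 1 : ℤ →₀ ℕ) s.1 : ℕ) : ℂ) ≠ 0 := by
        intro h0
        rw [h0, monomial_zero] at h1
        exact h1 rfl
      have h2 : σ s.2 ≠ 0 := by
        intro h0; rw [h0] at hc; simp at hc
      have h3 : (σ - Finsupp.single s.2 1 : ℤ →₀ ℕ) s.1 ≠ 0 := by
        intro h0; rw [h0] at hc; simp at hc
      have h4 : σ s.1 ≠ 0 := by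
        intro h0
        rw [Finsupp.tsub_apply, h0] at h3
        simp at h3
      simp only [Finset.coe_product, Set.mem_prod, Finset.mem_coe, Finsupp.mem_support_iff]
      exact ⟨h4, h2⟩
    · exact absurd rfl hs

lemma key (i : ℤ) (d : ℕ) : ∀ σ : ℤ →₀ ℕ, (∀ j ∈ σ.support, i < j) → dg σ = d + 1 →
    (Eop i)^[d] (monomial σ (1 : ℂ)) =
      ((Nat.factorial (d + 1) * Nat.factorial d : ℕ) : ℂ) • X (wt σ - d * i) := by
  induction d with
  | zero =>
    intro σ hσ hdg
    have hne : σ.support.Nonempty := by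
      rcases Finset.eq_empty_or_nonempty σ.support with h | h
      · exfalso
        have h0 : σ = 0 := Finsupp.support_eq_empty.mp h
        rw [h0] at hdg
        simp [dg] at hdg
      · exact h
    obtain ⟨j, hj⟩ := hne
    have hdg' : ∑ k ∈ σ.support, σ k = 1 := hdg
    have hj1 : σ j = 1 := by
      have h1 : 1 ≤ σ j := Nat.one_le_iff_ne_zero.mpr (Finsupp.mem_support_iff.mp hj)
      have h2 : σ j ≤ 1 := hdg' ▸ Finset.single_le_sum (fun k _ => Nat.zero_le (σ k)) hj
      omega
    have hσeq : σ = Finsupp.single j 1 := by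
      ext k
      rcases eq_or_ne k j with rfl | hk
      · rw [hj1, Finsupp.single_eq_same]
      · rw [Finsupp.single_apply, if_neg (Ne.symm hk)]
        by_contra h0
        have hk' : k ∈ σ.support := Finsupp.mem_support_iff.mpr h0
        have e1 : σ j + ∑ m ∈ σ.support.erase j, σ m = ∑ m ∈ σ.support, σ m :=
          Finset.add_sum_erase _ _ hj
        have e2 : σ k ≤ ∑ m ∈ σ.support.erase j, σ m :=
          Finset.single_le_sum (fun m _ => Nat.zero_le _) (Finset.mem_erase.mpr ⟨hk, hk'⟩)
        omega
    subst hσeq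
    have hwt : wt (Finsupp.single j 1) = j := by
      rw [wt, Finsupp.sum_single_index (by simp)]
      norm_num
    have hX : monomial (Finsupp.single j 1) (1:ℂ) = X j := rfl
    rw [Function.iterate_zero, id_eq, hX, hwt]
    norm_num
  | succ d ih =>
    intro σ hσ hdg
    rw [Function.iterate_succ_apply, Eop_monomial i σ hσ, Eop_iter_sum]
    have hterm : ∀ s ∈ σ.support ×ˢ σ.support,
        (Eop i)^[d] ((coefN σ s : ℂ) •
          monomial (σ - Finsupp.single s.2 1 - Finsupp.single s.1 1
            + Finsupp.single (s.1 + s.2 - i) 1) (1 : ℂ)) =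
        (coefN σ s : ℂ) •
          (((Nat.factorial (d + 1) * Nat.factorial d : ℕ) : ℂ) •
            X (wt σ - (d + 1 : ℕ) * i)) := by
      intro s hs
      rw [Finset.mem_product] at hs
      rcases Nat.eq_zero_or_pos (coefN σ s) with hc0 | hcpos
      · rw [hc0]
        push_cast
        rw [zero_smul, zero_smul, Eop_iter_zero]
      · rw [Eop_iter_smul]
        congr 1
        -- nonzero coefficient: both factors positive
        have h2 : 1 ≤ σ s.2 := by
          rcases Nat.eq_zero_or_pos (σ s.2) with h | h
          · exfalso; rw [coefN, h] at hcpos; simp at hcpos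
          · exact h
        have h1 : 1 ≤ (σ - Finsupp.single s.2 1 : ℤ →₀ ℕ) s.1 := by
          rcases Nat.eq_zero_or_pos ((σ - Finsupp.single s.2 1 : ℤ →₀ ℕ) s.1) with h | h
          · exfalso; rw [coefN, h] at hcpos; simp at hcpos
          · exact h
        set τ : ℤ →₀ ℕ := σ - Finsupp.single s.2 1 - Finsupp.single s.1 1 with hτ
        have hle2 : Finsupp.single s.2 1 ≤ σ := Finsupp.single_le_iff.mpr h2
        have hle1 : Finsupp.single s.1 1 ≤ σ - Finsupp.single s.2 1 :=
          Finsupp.single_le_iff.mpr h1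
        have hdec1 : τ + Finsupp.single s.1 1 = σ - Finsupp.single s.2 1 :=
          tsub_add_cancel_of_le hle1
        have hdec2 : (σ - Finsupp.single s.2 1) + Finsupp.single s.2 1 = σ :=
          tsub_add_cancel_of_le hle2
        have hσdec : σ = τ + Finsupp.single s.1 1 + Finsupp.single s.2 1 := by
          rw [hdec1, hdec2]
        have hsupτ : τ.support ⊆ σ.support := by
          intro k hk
          exact Finsupp.support_tsub (Finsupp.support_tsub hk)
        have hi1 : i < s.1 := hσ _ hs.1
        have hi2 : i < s.2 := hσ _ hs.2
        have hsupp' : ∀ j ∈ (τ + Finsupp.single (s.1 + s.2 - i) 1).support, i < j := by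
          intro k hk
          rcases Finset.mem_union.mp (Finsupp.support_add hk) with h | h
          · exact hσ _ (hsupτ h)
          · have := Finsupp.support_single_subset h
            rw [Finset.mem_singleton] at this
            subst this
            omega
        have hdgτ : dg τ = d := by
          have := hdg
          rw [hσdec, dg_add_single, dg_add_single] at this
          omega
        have hdg' : dg (τ + Finsupp.single (s.1 + s.2 - i) 1) = d + 1 := by
          rw [dg_add_single, hdgτ]
        have hwt' : wt (τ + Finsupp.single (s.1 + s.2 - i) 1) = wt σ - i := by
          rw [wt_add_single]
          have : wt σ = wt τ + s.1 + s.2 := by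
            rw [hσdec, wt_add_single, wt_add_single]
          omega
        rw [ih _ hsupp' hdg', hwt']
        congr 1
        push_cast
        ring
    have hcoef : ∑ s ∈ σ.support ×ˢ σ.support, (coefN σ s : ℂ)
        = (((d + 1) * (d + 2) : ℕ) : ℂ) := by
      rw [← Nat.cast_sum]
      congr 1
      rw [Finset.sum_product]
      rw [Finset.sum_comm]
      have hcol : ∀ y ∈ σ.support,
          ∑ x ∈ σ.support, coefN σ (x, y) = σ y * (d + 1) := by
        intro y hy
        have hsub : (σ - Finsupp.single y 1).support ⊆ σ.support := Finsupp.support_tsub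
        have hsum : ∑ x ∈ σ.support, (σ - Finsupp.single y 1 : ℤ →₀ ℕ) x
            = dg (σ - Finsupp.single y 1) := by
          rw [dg]
          exact (Finsupp.sum_of_support_subset (σ - Finsupp.single y 1) hsub
            (fun _ e => e) (fun _ _ => rfl)).symm
        have hy1 : 1 ≤ σ y := Nat.one_le_iff_ne_zero.mpr (Finsupp.mem_support_iff.mp hy)
        have hdgsub : dg (σ - Finsupp.single y 1) = d + 1 := by
          have hdec : (σ - Finsupp.single y 1) + Finsupp.single y 1 = σ :=
            tsub_add_cancel_of_le (Finsupp.single_le_iff.mpr hy1)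
          have := hdg
          rw [← hdec, dg_add_single] at this
          omega
        calc ∑ x ∈ σ.support, coefN σ (x, y)
            = ∑ x ∈ σ.support, σ y * (σ - Finsupp.single y 1 : ℤ →₀ ℕ) x := rfl
          _ = σ y * ∑ x ∈ σ.support, (σ - Finsupp.single y 1 : ℤ →₀ ℕ) x := by
              rw [Finset.mul_sum]
          _ = σ y * (d + 1) := by rw [hsum, hdgsub]
      rw [Finset.sum_congr rfl hcol, ← Finset.sum_mul]
      have : ∑ y ∈ σ.support, σ y = d + 2 := hdg
      rw [this]
      ring
    rw [Finset.sum_congr rfl hterm]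
    simp only [smul_smul]
    rw [← Finset.sum_smul, ← Finset.sum_mul, hcoef, ← Nat.cast_mul]
    congr 2
    rw [Nat.factorial_succ (d + 1), Nat.factorial_succ d]
    ring

/-- existence of a nonzero homogeneous `g` of degree `N+1`
in the variables `x_j`, `j > i`, with `E_i^N g = 0`. -/
theorem stmt4 (N : ℕ) (hN : 0 < N) (i : ℤ) :
    ∃ g : MvPolynomial ℤ ℂ, g ≠ 0 ∧ g.IsHomogeneous (N + 1) ∧
      (∀ j : ℤ, j ≤ i → pderiv j g = 0) ∧ (Eop i)^[N] g = 0 := by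
  classical
  set σ1 : ℤ →₀ ℕ := Finsupp.single (i + N + 2) 1 + Finsupp.single (i + 1) N with hσ1
  set σ2 : ℤ →₀ ℕ := Finsupp.single (i + 2) (N + 1) with hσ2
  have hσ1app : ∀ j : ℤ, σ1 j =
      (if i + (N : ℤ) + 2 = j then 1 else 0) + (if i + 1 = j then N else 0) := by
    intro j
    rw [hσ1, Finsupp.add_apply, Finsupp.single_apply, Finsupp.single_apply]
  have hσ2app : ∀ j : ℤ, σ2 j = if i + 2 = j then N + 1 else 0 := by
    intro j
    rw [hσ2, Finsupp.single_apply]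
  have hsupp1 : ∀ j ∈ σ1.support, i < j := by
    intro j hj
    rw [Finsupp.mem_support_iff] at hj
    by_contra hcon
    apply hj
    rw [hσ1app, if_neg (by omega), if_neg (by omega)]
    rfl
  have hsupp2 : ∀ j ∈ σ2.support, i < j := by
    intro j hj
    rw [Finsupp.mem_support_iff] at hj
    by_contra hcon
    apply hj
    rw [hσ2app, if_neg (by omega)]
  have hdg1 : dg σ1 = N + 1 := by
    rw [hσ1, dg, Finsupp.sum_add_index' (by simp) (fun _ _ _ => rfl),
      Finsupp.sum_single_index (rfl), Finsupp.sum_single_index (rfl)]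
    omega
  have hdg2 : dg σ2 = N + 1 := by
    rw [hσ2, dg, Finsupp.sum_single_index (rfl)]
  have hwt : wt σ1 = wt σ2 := by
    rw [hσ1, hσ2, wt, wt, Finsupp.sum_add_index' (by simp) (by intro a b c; push_cast; ring),
      Finsupp.sum_single_index (by simp), Finsupp.sum_single_index (by simp),
      Finsupp.sum_single_index (by simp)]
    push_cast
    ring
  have hne : σ2 ≠ σ1 := by
    intro h
    have h1 := hσ1app (i + 1)
    have h2 := hσ2app (i + 1)
    rw [← h] at h1
    rw [h2, if_neg (by omega), if_neg (by omega), if_pos rfl] at h1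
    omega
  refine ⟨monomial σ1 1 - monomial σ2 1, ?_, ?_, ?_, ?_⟩
  · intro h
    have hc : coeff σ1 (monomial σ1 (1:ℂ) - monomial σ2 1) = 1 := by
      rw [coeff_sub, coeff_monomial, coeff_monomial, if_pos rfl, if_neg hne]
      norm_num
    rw [h, coeff_zero] at hc
    exact one_ne_zero hc.symm
  · exact (isHomogeneous_monomial 1 ((dg_eq_degree σ1) ▸ hdg1)).sub
      (isHomogeneous_monomial 1 ((dg_eq_degree σ2) ▸ hdg2))
  · intro j hj
    have h1 : σ1 j = 0 := by
      rw [hσ1app, if_neg (by omega), if_neg (by omega)]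
    have h2 : σ2 j = 0 := by
      rw [hσ2app, if_neg (by omega)]
    rw [map_sub, pderiv_monomial, pderiv_monomial, h1, h2]
    norm_num
  · rw [Eop_iter_sub, key i N σ1 hsupp1 hdg1, key i N σ2 hsupp2 hdg2, hwt, sub_self]
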